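/- (Barnett decomposition formula) Let f = a_0 x^d + ... + a_d ∈ ℚ[x] with d ≥ 1 and a_0 ≠ 0, let X be the companion matrix of f, and let B(1), B(x) be the Bezout matrices of 1 and x. Then X·B(1) = B(x); equivalently, since B(1) is invertible, X = B(x)·B(1)^{-1}. -/

import Mathlib

open Polynomial

namespace Stmt9Aux

noncomputable abbrev x0 : MvPolynomial (Fin 2) ℚ := MvPolynomial.X 0
noncomputable abbrev x1 : MvPolynomial (Fin 2) ℚ := MvPolynomial.X 1

lemma single_add_single_inj (p q i j : ℕ) :
    (Finsupp.single (0 : Fin 2) p + Finsupp.single 1 q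
      = Finsupp.single 0 i + Finsupp.single 1 j) ↔ p = i ∧ q = j := by
  constructor
  · intro h
    have h0 := DFunLike.congr_fun h 0
    have h1 := DFunLike.congr_fun h 1
    simp [Finsupp.single_apply] at h0 h1
    exact ⟨h0, h1⟩
  · rintro ⟨rfl, rfl⟩; rfl

lemma coeff_pp (p q i j : ℕ) :
    MvPolynomial.coeff (Finsupp.single 0 i + Finsupp.single 1 j)
      (x0 ^ p * x1 ^ q) = if p = i ∧ q = j then 1 else 0 := by
  rw [MvPolynomial.X_pow_eq_monomial, MvPolynomial.X_pow_eq_monomial,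
    MvPolynomial.monomial_mul, MvPolynomial.coeff_monomial]
  simp [single_add_single_inj]

lemma sub_ne : (x0 - x1 : MvPolynomial (Fin 2) ℚ) ≠ 0 :=
  sub_ne_zero.mpr (fun h => absurd (MvPolynomial.X_injective h) (by decide))

lemma delta1_eq (d : ℕ) (a : ℕ → ℚ) (f : Polynomial ℚ)
    (hf : f = ∑ k ∈ Finset.range (d + 1), C (a k) * Polynomial.X ^ (d - k))
    (δ1 : MvPolynomial (Fin 2) ℚ)
    (hδ1 : (x0 - x1) * δ1 = Polynomial.aeval x0 f - Polynomial.aeval x1 f) :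
    δ1 = ∑ k ∈ Finset.range (d + 1), MvPolynomial.C (a k) *
      ∑ p ∈ Finset.range (d - k), x0 ^ p * x1 ^ (d - k - 1 - p) := by
  apply mul_left_cancel₀ sub_ne
  rw [hδ1, hf]
  simp only [map_sum, map_mul, map_pow, Polynomial.aeval_C, Polynomial.aeval_X,
    MvPolynomial.algebraMap_eq]
  rw [Finset.mul_sum, ← Finset.sum_sub_distrib]
  refine Finset.sum_congr rfl fun k _ => ?_
  have h := geom_sum₂_mul x0 x1 (d - k)
  linear_combination (-(MvPolynomial.C (a k))) * h

lemma delta1_coeff (d : ℕ) (a : ℕ → ℚ) (f : Polynomial ℚ)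
    (hf : f = ∑ k ∈ Finset.range (d + 1), C (a k) * Polynomial.X ^ (d - k))
    (δ1 : MvPolynomial (Fin 2) ℚ)
    (hδ1 : (x0 - x1) * δ1 = Polynomial.aeval x0 f - Polynomial.aeval x1 f)
    (i j : ℕ) :
    MvPolynomial.coeff (Finsupp.single 0 i + Finsupp.single 1 j) δ1 =
      if i + j + 1 ≤ d then a (d - 1 - i - j) else 0 := by
  rw [delta1_eq d a f hf δ1 hδ1]
  rw [MvPolynomial.coeff_sum]
  simp only [MvPolynomial.coeff_C_mul, MvPolynomial.coeff_sum, coeff_pp]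
  have h1 : ∀ k ∈ Finset.range (d + 1),
      (a k * ∑ p ∈ Finset.range (d - k), if p = i ∧ d - k - 1 - p = j then (1:ℚ) else 0)
        = if k = d - 1 - i - j ∧ i + j + 1 ≤ d then a k else 0 := by
    intro k hk
    rw [Finset.mem_range] at hk
    have inner : (∑ p ∈ Finset.range (d - k), if p = i ∧ d - k - 1 - p = j then (1:ℚ) else 0)
        = if i < d - k ∧ d - k - 1 - i = j then 1 else 0 := by
      rcases lt_or_ge i (d - k) with h | h
      · rw [Finset.sum_eq_single_of_mem i (Finset.mem_range.mpr h) (fun p _ hp => by simp [hp])]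
        by_cases hc : d - k - 1 - i = j <;> simp [hc, h]
      · rw [Finset.sum_eq_zero (fun p hp => ?_)]
        · simp [Nat.not_lt.2 h]
        · rw [Finset.mem_range] at hp
          have : p ≠ i := by omega
          simp [this]
    rw [inner]
    by_cases hc : i < d - k ∧ d - k - 1 - i = j
    · have h2 : k = d - 1 - i - j ∧ i + j + 1 ≤ d := by omega
      rw [if_pos hc, if_pos h2, mul_one]
    · have h2 : ¬(k = d - 1 - i - j ∧ i + j + 1 ≤ d) := by omega
      rw [if_neg hc, if_neg h2, mul_zero]
  rw [Finset.sum_congr rfl h1]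
  by_cases hle : i + j + 1 ≤ d
  · rw [Finset.sum_eq_single_of_mem (d - 1 - i - j) (Finset.mem_range.mpr (by omega))
      (fun k _ hk => by simp [hk])]
    simp [hle]
  · rw [Finset.sum_eq_zero (fun k _ => by simp [hle])]
    simp [hle]


lemma aevalx1_coeff (d : ℕ) (a : ℕ → ℚ) (f : Polynomial ℚ)
    (hf : f = ∑ k ∈ Finset.range (d + 1), C (a k) * Polynomial.X ^ (d - k))
    (i j : ℕ) :
    MvPolynomial.coeff (Finsupp.single 0 i + Finsupp.single 1 j) (Polynomial.aeval x1 f) =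
      if i = 0 ∧ j ≤ d then a (d - j) else 0 := by
  rw [hf]
  simp only [map_sum, map_mul, map_pow, Polynomial.aeval_C, Polynomial.aeval_X,
    MvPolynomial.algebraMap_eq, MvPolynomial.coeff_sum, MvPolynomial.coeff_C_mul]
  have hco : ∀ k : ℕ, MvPolynomial.coeff (Finsupp.single 0 i + Finsupp.single 1 j)
      (x1 ^ (d - k) : MvPolynomial (Fin 2) ℚ) = if 0 = i ∧ d - k = j then 1 else 0 := by
    intro k
    have := coeff_pp 0 (d - k) i j
    rwa [pow_zero, one_mul] at this
  simp only [hco]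
  have h1 : ∀ k ∈ Finset.range (d + 1),
      (a k * if 0 = i ∧ d - k = j then (1:ℚ) else 0)
        = if k = d - j ∧ (i = 0 ∧ j ≤ d) then a k else 0 := by
    intro k hk
    rw [Finset.mem_range] at hk
    by_cases hc : 0 = i ∧ d - k = j
    · have h2 : k = d - j ∧ (i = 0 ∧ j ≤ d) := by omega
      rw [if_pos hc, if_pos h2, mul_one]
    · have h2 : ¬(k = d - j ∧ (i = 0 ∧ j ≤ d)) := by omega
      rw [if_neg hc, if_neg h2, mul_zero]
  rw [Finset.sum_congr rfl h1]
  by_cases hc : i = 0 ∧ j ≤ d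
  · rw [Finset.sum_eq_single_of_mem (d - j) (Finset.mem_range.mpr (by omega))
      (fun k _ hk => by simp [hk])]
    simp [hc]
  · rw [Finset.sum_eq_zero (fun k _ => by simp [hc])]
    simp [hc]

lemma deltax_eq (d : ℕ) (a : ℕ → ℚ) (f : Polynomial ℚ)
    (δ1 δx : MvPolynomial (Fin 2) ℚ)
    (hδ1 : (x0 - x1) * δ1 = Polynomial.aeval x0 f - Polynomial.aeval x1 f)
    (hδx : (x0 - x1) * δx =
      Polynomial.aeval x0 f * x1 - Polynomial.aeval x1 f * x0) :
    δx = x1 * δ1 - Polynomial.aeval x1 f := by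
  apply mul_left_cancel₀ sub_ne
  rw [hδx]
  linear_combination (-(x1 : MvPolynomial (Fin 2) ℚ)) * hδ1

lemma deltax_coeff (d : ℕ) (a : ℕ → ℚ) (f : Polynomial ℚ)
    (hf : f = ∑ k ∈ Finset.range (d + 1), C (a k) * Polynomial.X ^ (d - k))
    (δ1 δx : MvPolynomial (Fin 2) ℚ)
    (hδ1 : (x0 - x1) * δ1 = Polynomial.aeval x0 f - Polynomial.aeval x1 f)
    (hδx : (x0 - x1) * δx =
      Polynomial.aeval x0 f * x1 - Polynomial.aeval x1 f * x0)
    (i j : ℕ) :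
    MvPolynomial.coeff (Finsupp.single 0 i + Finsupp.single 1 j) δx =
      (if 1 ≤ j then (if i + (j - 1) + 1 ≤ d then a (d - 1 - i - (j - 1)) else 0) else 0)
        - (if i = 0 ∧ j ≤ d then a (d - j) else 0) := by
  rw [deltax_eq d a f δ1 δx hδ1 hδx, MvPolynomial.coeff_sub,
    aevalx1_coeff d a f hf i j]
  congr 1
  rw [MvPolynomial.coeff_X_mul']
  by_cases hj : 1 ≤ j
  · rw [if_pos, if_pos hj]
    · have hm : (Finsupp.single (0 : Fin 2) i + Finsupp.single 1 j) - Finsupp.single 1 1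
          = Finsupp.single 0 i + Finsupp.single 1 (j - 1) := by
        ext s
        fin_cases s <;> simp [Finsupp.single_apply] <;> omega
      rw [hm, delta1_coeff d a f hf δ1 hδ1]
    · simp [Finsupp.mem_support_iff, Finsupp.single_apply]
      omega
  · rw [if_neg, if_neg hj]
    simp [Finsupp.mem_support_iff, Finsupp.single_apply]
    omega

end Stmt9Aux

open Stmt9Aux

/-- Barnett decomposition formula: `X·B(1) = B(x)`, equivalently `X = B(x)·B(1)⁻¹`,
where `X` is the companion matrix of `f` and `B(1), B(x)` its Bezout matrices. -/
theorem stmt_9 (d : ℕ) (hd : 1 ≤ d) (a : ℕ → ℚ) (ha : a 0 ≠ 0)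
    (f : Polynomial ℚ)
    (hf : f = ∑ k ∈ Finset.range (d + 1), C (a k) * Polynomial.X ^ (d - k))
    (X : Matrix (Fin d) (Fin d) ℚ)
    (hX : ∀ i j : Fin d, X i j =
      if (j : ℕ) = d - 1 then -a (d - (i : ℕ)) / a 0
      else if (i : ℕ) = (j : ℕ) + 1 then 1 else 0)
    (δ1 δx : MvPolynomial (Fin 2) ℚ)
    (hδ1 : (MvPolynomial.X 0 - MvPolynomial.X 1) * δ1 =
      Polynomial.aeval (MvPolynomial.X 0) f - Polynomial.aeval (MvPolynomial.X 1) f)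
    (hδx : (MvPolynomial.X 0 - MvPolynomial.X 1) * δx =
      Polynomial.aeval (MvPolynomial.X 0) f * MvPolynomial.X 1
        - Polynomial.aeval (MvPolynomial.X 1) f * MvPolynomial.X 0)
    (B1 Bx : Matrix (Fin d) (Fin d) ℚ)
    (hB1 : ∀ i j : Fin d, B1 i j =
      MvPolynomial.coeff (Finsupp.single 0 (i : ℕ) + Finsupp.single 1 (j : ℕ)) δ1)
    (hBx : ∀ i j : Fin d, Bx i j =
      MvPolynomial.coeff (Finsupp.single 0 (i : ℕ) + Finsupp.single 1 (j : ℕ)) δx) :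
    X * B1 = Bx ∧ X = Bx * B1⁻¹ := by
  set bc : ℕ → ℕ → ℚ := fun i j => if i + j + 1 ≤ d then a (d - 1 - i - j) else 0 with hbc
  have hB1' : ∀ i j : Fin d, B1 i j = bc (i : ℕ) (j : ℕ) := fun i j => by
    rw [hB1 i j, delta1_coeff d a f hf δ1 hδ1]
  have hBx' : ∀ i j : Fin d, Bx i j =
      (if 1 ≤ (j : ℕ) then bc (i : ℕ) ((j : ℕ) - 1) else 0)
        - (if (i : ℕ) = 0 then a (d - (j : ℕ)) else 0) := by
    intro i j
    rw [hBx i j, deltax_coeff d a f hf δ1 δx hδ1 hδx]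
    have hjd : (j : ℕ) ≤ d := le_of_lt j.isLt
    by_cases hi : (i : ℕ) = 0 <;> simp [hi, hjd, hbc]
  have key : X * B1 = Bx := by
    ext i j
    have hi := i.isLt
    have hj := j.isLt
    rw [Matrix.mul_apply]
    set kd : Fin d := ⟨d - 1, by omega⟩ with hkd
    set kp : Fin d := ⟨(i : ℕ) - 1, by omega⟩ with hkp
    have hterm : ∀ k : Fin d, X i k * B1 k j =
        (if k = kd then (-a (d - (i : ℕ)) / a 0) * bc (d - 1) (j : ℕ) else 0)
        + (if k = kp then (if 1 ≤ (i : ℕ) then bc ((i : ℕ) - 1) (j : ℕ) else 0) else 0) := by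
      intro k
      have hkv := k.isLt
      rw [hX, hB1']
      by_cases h1 : (k : ℕ) = d - 1
      · have hkeq : k = kd := Fin.ext (by simp [hkd, h1])
        rw [if_pos h1, if_pos hkeq, h1]
        have h2 : (if k = kp then (if 1 ≤ (i : ℕ) then bc ((i : ℕ) - 1) (j : ℕ) else 0) else 0) = 0 := by
          by_cases hke : k = kp
          · rw [if_pos hke, if_neg]
            rw [hke] at h1
            have h3 : (i : ℕ) - 1 = d - 1 := h1
            omega
          · rw [if_neg hke]
        rw [h2, add_zero]
      · have hkne : k ≠ kd := fun h => h1 (by rw [h])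
        rw [if_neg h1, if_neg hkne, zero_add]
        by_cases h2 : (i : ℕ) = (k : ℕ) + 1
        · have hke : k = kp := Fin.ext (by simp [hkp]; omega)
          rw [if_pos h2, one_mul, if_pos hke, if_pos (by omega : 1 ≤ (i : ℕ))]
          have : (i : ℕ) - 1 = (k : ℕ) := by omega
          rw [this]
        · rw [if_neg h2, zero_mul]
          by_cases hke : k = kp
          · rw [if_pos hke, if_neg]
            have : (k : ℕ) = (i : ℕ) - 1 := by rw [hke]
            omega
          · rw [if_neg hke]
    rw [Finset.sum_congr rfl (fun k _ => hterm k), Finset.sum_add_distrib,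
      Finset.sum_ite_eq' Finset.univ kd, Finset.sum_ite_eq' Finset.univ kp]
    simp only [Finset.mem_univ, if_true]
    rw [hBx']
    simp only [hbc]
    by_cases hi0 : (i : ℕ) = 0 <;> by_cases hj0 : (j : ℕ) = 0
    · have c1 : d - 1 + (j : ℕ) + 1 ≤ d := by omega
      have c2 : ¬ (1 ≤ (i : ℕ)) := by omega
      have c3 : ¬ (1 ≤ (j : ℕ)) := by omega
      have e1 : d - 1 - (d - 1) - (j : ℕ) = 0 := by omega
      have e2 : d - (j : ℕ) = d := by omega
      have e3 : d - (i : ℕ) = d := by omega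
      rw [e1, e2, e3, if_pos c1, if_neg c2, if_neg c3, if_pos hi0]
      field_simp
      ring
    · have c1 : ¬ (d - 1 + (j : ℕ) + 1 ≤ d) := by omega
      have c2 : ¬ (1 ≤ (i : ℕ)) := by omega
      have c3 : 1 ≤ (j : ℕ) := by omega
      have c5 : (i : ℕ) + ((j : ℕ) - 1) + 1 ≤ d := by omega
      have e1 : d - 1 - (i : ℕ) - ((j : ℕ) - 1) = d - (j : ℕ) := by omega
      rw [if_neg c1, if_neg c2, if_pos c3, if_pos c5, if_pos hi0, e1]
      ring
    · have c1 : d - 1 + (j : ℕ) + 1 ≤ d := by omega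
      have c2 : 1 ≤ (i : ℕ) := by omega
      have c3 : ¬ (1 ≤ (j : ℕ)) := by omega
      have c5 : (i : ℕ) - 1 + (j : ℕ) + 1 ≤ d := by omega
      have e1 : d - 1 - (d - 1) - (j : ℕ) = 0 := by omega
      have e2 : d - 1 - ((i : ℕ) - 1) - (j : ℕ) = d - (i : ℕ) := by omega
      rw [e1, if_pos c1, if_pos c2, if_pos c5, e2, if_neg c3, if_neg hi0]
      field_simp
      ring
    · have c1 : ¬ (d - 1 + (j : ℕ) + 1 ≤ d) := by omega
      have c2 : 1 ≤ (i : ℕ) := by omega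
      have c3 : 1 ≤ (j : ℕ) := by omega
      by_cases hc : (i : ℕ) + (j : ℕ) ≤ d
      · have c5 : (i : ℕ) - 1 + (j : ℕ) + 1 ≤ d := by omega
        have c6 : (i : ℕ) + ((j : ℕ) - 1) + 1 ≤ d := by omega
        have e1 : d - 1 - ((i : ℕ) - 1) - (j : ℕ) = d - 1 - (i : ℕ) - ((j : ℕ) - 1) := by omega
        rw [if_neg c1, if_pos c2, if_pos c5, if_pos c3, if_pos c6, if_neg hi0, e1]
        ring
      · have c5 : ¬ ((i : ℕ) - 1 + (j : ℕ) + 1 ≤ d) := by omega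
        have c6 : ¬ ((i : ℕ) + ((j : ℕ) - 1) + 1 ≤ d) := by omega
        rw [if_neg c1, if_pos c2, if_neg c5, if_pos c3, if_neg c6, if_neg hi0]
        ring
  refine ⟨key, ?_⟩
  have hdet : IsUnit B1.det := by
    set M : Matrix (Fin d) (Fin d) ℚ := Matrix.of fun i j : Fin d => bc (i : ℕ) (d - 1 - (j : ℕ)) with hM
    have hBM : B1 = M.submatrix id ⇑(Fin.revPerm) := by
      ext i j
      rw [hB1']
      simp only [Matrix.submatrix_apply, id, hM, Matrix.of_apply, Fin.revPerm_apply, Fin.val_rev]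
      congr 1
      omega
    have hMtri : M.BlockTriangular id := by
      intro i j hij
      simp only [hM, Matrix.of_apply, hbc]
      rw [if_neg]
      have := j.isLt
      simp only [id] at hij
      omega
    have hMdet : M.det = a 0 ^ d := by
      rw [Matrix.det_of_upperTriangular hMtri]
      have : ∀ i : Fin d, M i i = a 0 := by
        intro i
        have := i.isLt
        simp only [hM, Matrix.of_apply, hbc]
        rw [if_pos (by omega)]
        congr 1
        omega
      simp [this]
    rw [hBM, Matrix.det_permute', hMdet]
    apply isUnit_iff_ne_zero.mpr
    rcases Int.units_eq_one_or (Equiv.Perm.sign (Fin.revPerm : Equiv.Perm (Fin d))) with hs | hs <;>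
      rw [hs] <;> simpa using pow_ne_zero d ha
  rw [← key, Matrix.mul_nonsing_inv_cancel_right _ _ hdet]
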